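/- Let λ_1, …, λ_{n-1} be real constants with Σ λ_i ≠ 0, and set R(y) = −(1/3) Σ_{i=1}^{n-1} λ_i/(1 − λ_i y). If α is a solution of α''/(1+α'²) = R(α) with α(0) = α'(0) = 0, then 1 + α'(x)² = ∏_{i=1}^{n-1} (1 − λ_i α(x))^{2/3} for all x in a neighborhood of 0 where the solution exists and all 1 − λ_i α > 0. -/

import Mathlib

/-- First integral of the profile-curve ODE: if α''/(1+α'²) = R(α) with
R(y) = −(1/3) Σᵢ λᵢ/(1−λᵢy) and α(0) = α'(0) = 0, then
1 + α'² = ∏ᵢ (1 − λᵢ α)^{2/3} wherever the solution exists with 1 − λᵢ α > 0. -/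
theorem stmt_3 (n : ℕ) (hn : 2 ≤ n) (lam : Fin (n - 1) → ℝ)
    (hsum : ∑ i, lam i ≠ 0)
    (R : ℝ → ℝ) (hR : ∀ y, R y = -(1 / 3) * ∑ i : Fin (n - 1), lam i / (1 - lam i * y))
    (s : Set ℝ) (hs : IsOpen s) (hsconv : Convex ℝ s) (h0s : (0 : ℝ) ∈ s)
    (α α' α'' : ℝ → ℝ)
    (hd1 : ∀ x ∈ s, HasDerivAt α (α' x) x)
    (hd2 : ∀ x ∈ s, HasDerivAt α' (α'' x) x)
    (hode : ∀ x ∈ s, α'' x / (1 + (α' x) ^ 2) = R (α x))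
    (hpos : ∀ x ∈ s, ∀ i : Fin (n - 1), 0 < 1 - lam i * α x)
    (hα0 : α 0 = 0) (hα'0 : α' 0 = 0) :
    ∀ x ∈ s, 1 + (α' x) ^ 2 = ∏ i : Fin (n - 1), (1 - lam i * α x) ^ ((2 : ℝ) / 3) := by
  set g : ℝ → ℝ := fun x =>
    Real.log (1 + (α' x) ^ 2) - (2 / 3) * ∑ i : Fin (n - 1), Real.log (1 - lam i * α x)
    with hg
  have hq : ∀ x : ℝ, (0 : ℝ) < 1 + (α' x) ^ 2 := fun x => by positivity
  -- g has zero derivative on s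
  have hg' : ∀ x ∈ s, HasDerivAt g 0 x := by
    intro x hx
    have h1 : HasDerivAt (fun x => 1 + (α' x) ^ 2) (2 * α' x * α'' x) x := by
      have := ((hd2 x hx).pow 2).const_add (1 : ℝ)
      simpa [mul_comm, mul_assoc, mul_left_comm] using this
    have hlog1 : HasDerivAt (fun x => Real.log (1 + (α' x) ^ 2))
        ((2 * α' x * α'' x) / (1 + (α' x) ^ 2)) x :=
      h1.log (ne_of_gt (hq x))
    have hlog2 : HasDerivAt (fun x => ∑ i : Fin (n - 1), Real.log (1 - lam i * α x))
        (∑ i : Fin (n - 1), (-(lam i) * α' x) / (1 - lam i * α x)) x := by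
      apply HasDerivAt.fun_sum
      intro i _
      have hi : HasDerivAt (fun x => 1 - lam i * α x) (-(lam i) * α' x) x := by
        have := ((hd1 x hx).const_mul (lam i)).const_sub (1 : ℝ)
        simpa [neg_mul] using this
      exact hi.log (ne_of_gt (hpos x hx i))
    have := hlog1.sub (hlog2.const_mul (2 / 3 : ℝ))
    have hkey : (2 * α' x * α'' x) / (1 + (α' x) ^ 2)
        - (2 / 3) * ∑ i : Fin (n - 1), (-(lam i) * α' x) / (1 - lam i * α x) = 0 := by
      have hode' : α'' x = R (α x) * (1 + (α' x) ^ 2) := by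
        rw [← hode x hx]; field_simp
      have h2 : 2 * α' x * α'' x / (1 + (α' x) ^ 2)
          = 2 * α' x * (α'' x / (1 + (α' x) ^ 2)) := by ring
      rw [h2, hode x hx, hR]
      simp only [Finset.mul_sum, ← Finset.sum_sub_distrib]
      apply Finset.sum_eq_zero
      intro i _
      ring
    rw [← hkey]
    exact this
  -- g is constant equal to g 0 = 0
  have hg0 : g 0 = 0 := by
    simp [hg, hα0, hα'0]
  have hconst : ∀ x ∈ s, g x = 0 := by
    intro x hx
    have := hsconv.norm_image_sub_le_of_norm_hasDerivWithin_le
      (f := g) (f' := fun _ => (0 : ℝ)) (C := 0)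
      (fun y hy => (hg' y hy).hasDerivWithinAt) (fun y _ => by simp) h0s hx
    have : ‖g x - g 0‖ ≤ 0 := by simpa using this
    have := norm_le_zero_iff.mp this
    have := sub_eq_zero.mp this
    rw [this, hg0]
  intro x hx
  -- exponentiate
  have hlogsum : Real.log (1 + (α' x) ^ 2)
      = Real.log (∏ i : Fin (n - 1), (1 - lam i * α x) ^ ((2 : ℝ) / 3)) := by
    have h1 : Real.log (1 + (α' x) ^ 2)
        = (2 / 3) * ∑ i : Fin (n - 1), Real.log (1 - lam i * α x) := by
      have := hconst x hx
      simp only [hg] at this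
      linarith
    rw [h1, Real.log_prod]
    · rw [Finset.mul_sum]
      refine Finset.sum_congr rfl fun i _ => ?_
      rw [Real.log_rpow (hpos x hx i), mul_comm]
    · intro i _
      exact ne_of_gt (Real.rpow_pos_of_pos (hpos x hx i) _)
  have hprodpos : (0 : ℝ) < ∏ i : Fin (n - 1), (1 - lam i * α x) ^ ((2 : ℝ) / 3) :=
    Finset.prod_pos fun i _ => Real.rpow_pos_of_pos (hpos x hx i) _
  calc 1 + (α' x) ^ 2 = Real.exp (Real.log (1 + (α' x) ^ 2)) := (Real.exp_log (hq x)).symm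
    _ = Real.exp (Real.log (∏ i : Fin (n - 1), (1 - lam i * α x) ^ ((2 : ℝ) / 3))) := by
        rw [hlogsum]
    _ = _ := Real.exp_log hprodpos
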